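/- For a FIFO cache of associativity A and a shared-memory attacker, the maximum number of knowledge sets into which any probing strategy can partition any set of possible initial cache states is at most (A+1)!. -/

import Mathlib

/-- LRU update: accessed block gets age 0; blocks younger than it (or all cached
blocks on a miss) age by one; other blocks are unchanged. -/
def updLRU (A : ℕ) (b : ℕ) (c : ℕ → ℕ) : ℕ → ℕ := fun b' =>
  if b' = b then 0 else if c b' < min (c b) A then c b' + 1 else c b'

/-- FIFO update: hits leave the state unchanged; on a miss the accessed block gets
age 0 and cached blocks age by one (the oldest is evicted). -/
def updFIFO (A : ℕ) (b : ℕ) (c : ℕ → ℕ) : ℕ → ℕ :=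
  if c b < A then c
  else fun b' => if b' = b then 0 else if c b' < A then c b' + 1 else c b'

/-- Generic permutation-policy update with permutation function `P`:
on a hit, ages of cached blocks are permuted by `P (c b)`; on a miss the accessed
block gets age 0 and cached blocks age by one. -/
def updPerm (P : ℕ → ℕ → ℕ) (A : ℕ) (b : ℕ) (c : ℕ → ℕ) : ℕ → ℕ :=
  if c b < A then fun b' => if c b' < A then P (c b) (c b') else c b'
  else fun b' => if b' = b then 0 else if c b' < A then c b' + 1 else c b'

/-- The PLRU permutation function. -/
def piPLRU (a a' : ℕ) : ℕ :=
  if _h1 : a' = a then 0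
  else if _h2 : a % 2 = 0 ∧ a' % 2 = 1 then a'
  else if _h3 : a % 2 = 1 ∧ a' % 2 = 0 then a' + 1
  else 2 * piPLRU (a / 2) (a' / 2)
termination_by a + a'
decreasing_by omega

/-- The PLRU update. -/
def updPLRU (A : ℕ) : ℕ → (ℕ → ℕ) → (ℕ → ℕ) := updPerm piPLRU A

/-- Sequential application of the update function along a trace of accesses. -/
def updTrace (upd : ℕ → (ℕ → ℕ) → (ℕ → ℕ)) : List ℕ → (ℕ → ℕ) → (ℕ → ℕ)
  | [], c => c
  | b :: t, c => updTrace upd t (upd b c)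

/-- States reachable from `c₀` using traces over the set of blocks `B`. -/
def Reach (upd : ℕ → (ℕ → ℕ) → (ℕ → ℕ)) (B : Set ℕ) (c₀ : ℕ → ℕ) : Set (ℕ → ℕ) :=
  {c | ∃ t : List ℕ, (∀ b ∈ t, b ∈ B) ∧ updTrace upd t c₀ = c}

/-- Cache state invariant: ages are at most `A`, and distinct blocks have distinct
ages unless both have age `A` (uncached). -/
def CacheInv (A : ℕ) (c : ℕ → ℕ) : Prop :=
  (∀ b, c b ≤ A) ∧ ∀ b b', c b < A → c b = c b' → b = b'

/-- `c` is filled with `B`: the blocks of `B` occupy the youngest ages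
`{0, …, min (A, |B|−1)}`, and all remaining cache lines are occupied
(by attacker blocks). -/
def FilledWith (A : ℕ) (c : ℕ → ℕ) (B : Finset ℕ) : Prop :=
  CacheInv A c ∧ (∀ a, a < A → ∃ b, c b = a) ∧
    c '' ↑B = Set.Iio (min (A + 1) B.card)

/-- `c` is empty w.r.t. `B`: no block of `B` is cached, and all cache lines are
occupied (by attacker blocks). -/
def EmptyWith (A : ℕ) (c : ℕ → ℕ) (B : Finset ℕ) : Prop :=
  CacheInv A c ∧ (∀ b ∈ B, c b = A) ∧ (∀ a, a < A → ∃ b, c b = a)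

/-- Run a Mealy machine along the inputs of a probe. -/
def mrun {S I O : Type*} (upd : I → S → S) : List (I × O) → S → S
  | [], s => s
  | io :: p, s => mrun upd p (upd io.1 s)

/-- A state `s` is coherent with a probe if the machine, started in `s`,
produces the probe's observations on the probe's inputs. -/
def Coherent {S I O : Type*} (upd : I → S → S) (view : I → S → O) :
    List (I × O) → S → Prop
  | [], _ => True
  | io :: p, s => view io.1 s = io.2 ∧ Coherent upd view p (upd io.1 s)

/-- Knowledge set of a probe: the possible initial states coherent with it. -/
def Kset {S I O : Type*} (upd : I → S → S) (view : I → S → O) (Sv : Set S)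
    (p : List (I × O)) : Set S :=
  {s ∈ Sv | Coherent upd view p s}

/-- Final knowledge set of a probe: states the machine may be in afterwards. -/
def FKset {S I O : Type*} (upd : I → S → S) (view : I → S → O) (Sv : Set S)
    (p : List (I × O)) : Set S :=
  mrun upd p '' Kset upd view Sv p

/-- The probe's inputs follow the probing strategy `att`. -/
def Follows {I O : Type*} (att : List O → I) (p : List (I × O)) : Prop :=
  ∀ i (h : i < p.length), (p.get ⟨i, h⟩).1 = att ((p.map Prod.snd).take i)

/-- A probe of `att` is depleted if no realizable extension of it following `att`
refines its knowledge set. -/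
def Depleted {S I O : Type*} (upd : I → S → S) (view : I → S → O) (Sv : Set S)
    (att : List O → I) (p : List (I × O)) : Prop :=
  Follows att p ∧ ∀ q, Follows att q → p <+: q → (Kset upd view Sv q).Nonempty →
    Kset upd view Sv q = Kset upd view Sv p

/-- The knowledge sets produced by the depleted probes of strategy `att`. -/
def KnowledgeSets {S I O : Type*} (upd : I → S → S) (view : I → S → O)
    (Sv : Set S) (att : List O → I) : Set (Set S) :=
  {K | ∃ p, Depleted upd view Sv att p ∧ K = Kset upd view Sv p ∧ K.Nonempty}

/-- Cache observation: `true` for a hit, `false` for a miss. -/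
def viewCache (A : ℕ) (b : ℕ) (c : ℕ → ℕ) : Bool := decide (c b < A)



section Generic
variable {S I O : Type*} (upd : I → S → S) (view : I → S → O) (att : List O → I)

theorem mrun_append (p q : List (I × O)) (s : S) :
    mrun upd (p ++ q) s = mrun upd q (mrun upd p s) := by
  induction p generalizing s with
  | nil => rfl
  | cons a p ih => simp [mrun, ih]

theorem coherent_append (p q : List (I × O)) (s : S) :
    Coherent upd view (p ++ q) s ↔
      Coherent upd view p s ∧ Coherent upd view q (mrun upd p s) := by
  induction p generalizing s with
  | nil => simp [Coherent, mrun]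
  | cons a p ih => simp [Coherent, mrun, ih, and_assoc]

/-- The canonical probe of length `n` obtained by running strategy `att` from state `c`. -/
def probeN (c : S) : ℕ → List (I × O)
  | 0 => []
  | n+1 =>
    let p := probeN c n
    let i := att (p.map Prod.snd)
    p ++ [(i, view i (mrun upd p c))]

@[simp] theorem probeN_length (c : S) (n : ℕ) : (probeN upd view att c n).length = n := by
  induction n with
  | zero => rfl
  | succ n ih => simp [probeN, ih]

theorem probeN_prefix (c : S) {m n : ℕ} (h : m ≤ n) :
    probeN upd view att c m <+: probeN upd view att c n := by
  induction n with
  | zero => simp_all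
  | succ n ih =>
    rcases Nat.lt_or_ge m (n+1) with h' | h'
    · exact (ih (by omega)).trans (by simp [probeN])
    · have : m = n + 1 := by omega
      subst this; rfl

theorem coherent_probeN (c : S) (n : ℕ) : Coherent upd view (probeN upd view att c n) c := by
  induction n with
  | zero => trivial
  | succ n ih =>
    rw [probeN, coherent_append]
    exact ⟨ih, rfl, trivial⟩

theorem follows_probeN (c : S) (n : ℕ) : Follows att (probeN upd view att c n) := by
  induction n with
  | zero => intro i h; simp at h
  | succ n ih =>
    intro i h
    simp only [probeN]
    rcases Nat.lt_or_ge i n with h' | h'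
    · rw [List.get_eq_getElem, List.getElem_append_left (by simpa using h'),
        List.map_append, List.take_append_of_le_length (by simpa using h'.le)]
      exact ih i (by simpa using h')
    · have hi : i = n := by have := h; simp at this; omega
      subst hi
      rw [List.get_eq_getElem, List.getElem_append_right (by simp)]
      simp

variable {S I O : Type*} (upd : I → S → S) (view : I → S → O) (att : List O → I)

theorem follows_append_left {p q : List (I × O)} (h : Follows att (p ++ q)) : Follows att p := by
  intro i hi
  have h2 := h i (by simp; omega)
  rw [List.get_eq_getElem, List.getElem_append_left hi] at h2
  rw [List.get_eq_getElem, h2, List.map_append, List.take_append_of_le_length (by simpa using hi.le)]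

theorem probeN_unique {p : List (I × O)} {c : S} (hf : Follows att p)
    (hc : Coherent upd view p c) : p = probeN upd view att c p.length := by
  induction p using List.reverseRecOn with
  | nil => rfl
  | append_singleton q x ih =>
    have hfq : Follows att q := follows_append_left att (p := q) (q := [x]) hf
    rw [coherent_append] at hc
    have hq := ih hfq hc.1
    have hx1 : x.1 = att (q.map Prod.snd) := by
      have := hf q.length (by simp)
      rw [List.get_eq_getElem, List.getElem_append_right (by simp)] at this
      simpa using this
    have hx2 : view x.1 (mrun upd q c) = x.2 := hc.2.1
    have hx : x = (att (q.map Prod.snd), view (att (q.map Prod.snd)) (mrun upd q c)) := by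
      obtain ⟨x1, x2⟩ := x
      simp only at hx1 hx2 ⊢
      subst hx1; rw [hx2]
    have hlen : (q ++ [x]).length = q.length + 1 := by simp
    rw [hlen, probeN]
    simp only [← hq]
    rw [hx]

theorem kset_eq_of_depleted {Sv : Set S} {p q : List (I × O)} {c c' : S}
    (hd : Depleted upd view Sv att p) (hdq : Follows att q)
    (hc : c ∈ Kset upd view Sv p) (hc' : c' ∈ Kset upd view Sv q)
    (hpp : p = probeN upd view att c p.length) (hqq : q = probeN upd view att c' q.length)
    (hpf : (fun n => probeN upd view att c n) = (fun n => probeN upd view att c' n))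
    (hlen : p.length ≤ q.length) :
    Kset upd view Sv q = Kset upd view Sv p := by
  have hpq : p <+: q := by
    rw [hpp, hqq, ← congrFun hpf q.length]
    exact probeN_prefix upd view att c hlen
  exact hd.2 q hdq hpq ⟨c', hc'⟩

theorem knowledgeSets_ncard_le (Sv : Set S) (hfin : Sv.Finite) :
    (KnowledgeSets upd view Sv att).ncard ≤
      ((fun c => (fun n => probeN upd view att c n)) '' Sv).ncard := by
  classical
  set F : S → (ℕ → List (I × O)) := fun c => (fun n => probeN upd view att c n) with hF
  have hKsub : ∀ {r : List (I × O)}, Kset upd view Sv r ⊆ Sv := fun {r} s hs => hs.1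
  refine Set.ncard_le_ncard_of_injOn
    (fun K => if h : K.Nonempty then F h.some else (fun _ => [])) ?_ ?_ (hfin.image F)
  · rintro K ⟨p, hd, rfl, hne⟩
    rw [dif_pos hne]
    exact ⟨hne.some, hKsub hne.some_mem, rfl⟩
  · rintro K ⟨p, hdp, rfl, hne⟩ K' ⟨q, hdq, rfl, hne'⟩ hFeq
    dsimp only at hFeq
    rw [dif_pos hne, dif_pos hne'] at hFeq
    set c := hne.some with hc
    set c' := hne'.some with hc'
    have hcK : c ∈ Kset upd view Sv p := hne.some_mem
    have hcK' : c' ∈ Kset upd view Sv q := hne'.some_mem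
    have hpp : p = probeN upd view att c p.length :=
      probeN_unique upd view att hdp.1 hcK.2
    have hqq : q = probeN upd view att c' q.length :=
      probeN_unique upd view att hdq.1 hcK'.2
    rcases le_total p.length q.length with hle | hle
    · exact (kset_eq_of_depleted upd view att hdp hdq.1 hcK hcK' hpp hqq hFeq hle).symm
    · exact kset_eq_of_depleted upd view att hdq hdp.1 hcK' hcK hqq hpp hFeq.symm hle

end Generic

section FIFO
variable (A : ℕ) (att : List Bool → ℕ)

/-- Probe of length `n` from state `c` in the FIFO machine. -/
def prb (c : ℕ → ℕ) (n : ℕ) : List (ℕ × Bool) := probeN (updFIFO A) (viewCache A) att c n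
/-- Cache state at time `n`. -/
def st (c : ℕ → ℕ) (n : ℕ) : ℕ → ℕ := mrun (updFIFO A) (prb A att c n) c
/-- Input at time `n`. -/
def inp (c : ℕ → ℕ) (n : ℕ) : ℕ := att ((prb A att c n).map Prod.snd)
/-- Observation at time `n`. -/
def obs (c : ℕ → ℕ) (n : ℕ) : Bool := viewCache A (inp A att c n) (st A att c n)
/-- Miss count before time `n`. -/
def mc (c : ℕ → ℕ) (n : ℕ) : ℕ := ((prb A att c n).map Prod.snd).count false

variable {A : ℕ} {att : List Bool → ℕ} {c c' : ℕ → ℕ}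

theorem prb_succ (n : ℕ) : prb A att c (n+1) = prb A att c n ++ [(inp A att c n, obs A att c n)] := rfl

theorem st_zero : st A att c 0 = c := rfl

theorem st_succ (n : ℕ) : st A att c (n+1) = updFIFO A (inp A att c n) (st A att c n) := by
  unfold st
  rw [prb_succ, mrun_append]
  rfl

theorem mc_zero : mc A att c 0 = 0 := rfl

theorem mc_succ (n : ℕ) : mc A att c (n+1) = mc A att c n + (if obs A att c n = false then 1 else 0) := by
  unfold mc
  rw [prb_succ]
  rcases h : obs A att c n <;> simp [h, List.count_append]

theorem mc_mono {m n : ℕ} (h : m ≤ n) : mc A att c m ≤ mc A att c n := by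
  induction n with
  | zero => simp_all
  | succ n ih =>
    rcases Nat.lt_or_ge m (n+1) with h' | h'
    · exact le_trans (ih (by omega)) (by rw [mc_succ]; omega)
    · have : m = n + 1 := by omega
      subst this; rfl

theorem prb_take {m n : ℕ} (h : m ≤ n) : prb A att c m = (prb A att c n).take m := by
  have hp := probeN_prefix (updFIFO A) (viewCache A) att c h
  rw [List.prefix_iff_eq_take] at hp
  unfold prb
  rw [hp, probeN_length]

/-- hit leaves the state unchanged -/
theorem st_succ_of_hit {n : ℕ} (h : obs A att c n = true) : st A att c (n+1) = st A att c n := by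
  rw [st_succ]
  unfold obs viewCache at h
  rw [updFIFO, if_pos (by simpa using h)]

theorem st_const {u v : ℕ} (huv : u ≤ v) (h : ∀ w, u ≤ w → w < v → obs A att c w = true) :
    st A att c v = st A att c u := by
  induction v with
  | zero => simp_all
  | succ v ih =>
    rcases Nat.lt_or_ge u (v+1) with h' | h'
    · rw [st_succ_of_hit (h v (by omega) (by omega))]
      exact ih (by omega) (fun w hw hw' => h w hw (by omega))
    · have : u = v + 1 := by omega
      subst this; rfl

theorem updFIFO_hit {i : ℕ} (h : c i < A) : updFIFO A i c = c := if_pos h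

theorem updFIFO_miss {i b : ℕ} (h : ¬ c i < A) :
    updFIFO A i c b = if b = i then 0 else if c b < A then c b + 1 else c b := by
  unfold updFIFO
  rw [if_neg h]

theorem ages_le_updFIFO {i : ℕ} (h : ∀ b, c b ≤ A) : ∀ b, updFIFO A i c b ≤ A := by
  intro b
  by_cases hi : c i < A
  · rw [updFIFO_hit hi]; exact h b
  · rw [updFIFO_miss hi]
    have := h b
    split
    · omega
    · split <;> omega

theorem cacheInv_updFIFO {i : ℕ} (h : CacheInv A c) : CacheInv A (updFIFO A i c) := by
  obtain ⟨h1, h2⟩ := h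
  refine ⟨ages_le_updFIFO h1, ?_⟩
  intro b b' hb hbe
  by_cases hi : c i < A
  · rw [updFIFO_hit hi] at hb hbe; exact h2 b b' hb hbe
  · rw [updFIFO_miss hi] at hb hbe
    rw [updFIFO_miss hi (b := b')] at hbe
    by_cases hbi : b = i <;> by_cases hbi' : b' = i
    · rw [hbi, hbi']
    · rw [if_pos hbi] at hb hbe
      rw [if_neg hbi'] at hbe
      have := h1 b'
      rcases Nat.lt_or_ge (c b') A with h' | h'
      · rw [if_pos h'] at hbe; omega
      · rw [if_neg (by omega)] at hbe; omega
    · rw [if_neg hbi] at hb hbe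
      rw [if_pos hbi'] at hbe
      have := h1 b
      rcases Nat.lt_or_ge (c b) A with h' | h'
      · rw [if_pos h'] at hb hbe; omega
      · rw [if_neg (by omega)] at hb hbe; omega
    · rw [if_neg hbi] at hb hbe
      rw [if_neg hbi'] at hbe
      have hb1 := h1 b
      have hb2 := h1 b'
      rcases Nat.lt_or_ge (c b) A with h' | h' <;> rcases Nat.lt_or_ge (c b') A with h'' | h''
      · rw [if_pos h'] at hb hbe; rw [if_pos h''] at hbe
        exact h2 b b' h' (by omega)
      · rw [if_pos h'] at hb hbe; rw [if_neg (by omega)] at hbe; omega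
      · rw [if_neg (by omega)] at hb hbe; rw [if_pos h''] at hbe; omega
      · rw [if_neg (by omega)] at hb hbe; omega

theorem st_ages_le (h : ∀ b, c b ≤ A) (t : ℕ) : ∀ b, st A att c t b ≤ A := by
  induction t with
  | zero => exact h
  | succ t ih => rw [st_succ]; exact ages_le_updFIFO ih

theorem cacheInv_st (h : CacheInv A c) (t : ℕ) : CacheInv A (st A att c t) := by
  induction t with
  | zero => exact h
  | succ t ih => rw [st_succ]; exact cacheInv_updFIFO ih

/-- `b` was accessed as a miss strictly before time `t`. -/
def missedAt (A : ℕ) (att : List Bool → ℕ) (c : ℕ → ℕ) (b t : ℕ) : Prop :=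
  ∃ u, u < t ∧ obs A att c u = false ∧ inp A att c u = b

theorem obs_false_iff {n : ℕ} : obs A att c n = false ↔ A ≤ st A att c n (inp A att c n) := by
  unfold obs viewCache
  simp

theorem obs_true_iff {n : ℕ} : obs A att c n = true ↔ st A att c n (inp A att c n) < A := by
  unfold obs viewCache
  simp

/-- Age formula for never-missed blocks. -/
theorem age_formula (h : ∀ b, c b ≤ A) {b t : ℕ} (hm : ¬ missedAt A att c b t) :
    st A att c t b = min (c b + mc A att c t) A := by
  induction t with
  | zero => rw [st_zero, mc_zero]; have := h b; omega
  | succ t ih =>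
    have hm' : ¬ missedAt A att c b t := by
      intro ⟨u, hu, h1, h2⟩; exact hm ⟨u, by omega, h1, h2⟩
    have hst := ih hm'
    have hle := st_ages_le (att := att) h t
    rcases ho : obs A att c t with _ | _
    · have hne : b ≠ inp A att c t := fun he => hm ⟨t, by omega, ho, he.symm⟩
      have hmiss := obs_false_iff.mp ho
      have hmc : mc A att c (t+1) = mc A att c t + 1 := by rw [mc_succ, ho]; simp
      rw [st_succ, hmc, updFIFO_miss (by omega), if_neg hne]
      have := hle b
      split <;> omega
    · have hhit := obs_true_iff.mp ho
      have hmc : mc A att c (t+1) = mc A att c t := by rw [mc_succ, ho]; simp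
      rw [st_succ, hmc, updFIFO_hit hhit, hst]

theorem st_le_succ (n b : ℕ) :
    st A att c (n+1) b ≤ st A att c n b + (if obs A att c n = false then 1 else 0) := by
  rw [st_succ]
  rcases ho : obs A att c n with _ | _
  · have hmiss := obs_false_iff.mp ho
    rw [updFIFO_miss (by omega)]
    have hone : (if (false:Bool) = false then (1:ℕ) else 0) = 1 := rfl
    rw [hone]
    split
    · omega
    · split <;> omega
  · rw [updFIFO_hit (obs_true_iff.mp ho)]
    simp

theorem st_le {u v : ℕ} (h : u ≤ v) (b : ℕ) :
    st A att c v b + mc A att c u ≤ st A att c u b + mc A att c v := by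
  induction v with
  | zero => simp_all
  | succ v ih =>
    rcases Nat.lt_or_ge u (v+1) with h' | h'
    · have h1 := st_le_succ (A := A) (att := att) (c := c) v b
      have h2 := mc_succ (A := A) (att := att) (c := c) v
      have h3 := ih (by omega)
      split at h1 <;> simp_all <;> omega
    · have : u = v + 1 := by omega
      subst this; rfl

/-- time `t` is the `j`-th miss (`j` misses happened strictly before). -/
def isMiss (A : ℕ) (att : List Bool → ℕ) (c : ℕ → ℕ) (j t : ℕ) : Prop :=
  obs A att c t = false ∧ mc A att c t = j

theorem isMiss_unique {j t t' : ℕ} (h : isMiss A att c j t) (h' : isMiss A att c j t') : t = t' := by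
  by_contra hne
  wlog hlt : t < t' generalizing t t'
  · exact this h' h (Ne.symm hne) (by omega)
  · have h1 : mc A att c (t+1) = j + 1 := by rw [mc_succ, h.1, h.2]; simp
    have h2 := mc_mono (A := A) (att := att) (c := c) (show t+1 ≤ t' by omega)
    rw [h1, h'.2] at h2
    omega

/-- the `j`-th miss happens at all. -/
def hasM (A : ℕ) (att : List Bool → ℕ) (c : ℕ → ℕ) (j : ℕ) : Prop :=
  ∃ t, isMiss A att c j t

/-- time of the `j`-th miss. -/
noncomputable def mtm (A : ℕ) (att : List Bool → ℕ) (c : ℕ → ℕ) (j : ℕ) : ℕ :=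
  sInf {t | isMiss A att c j t}

theorem isMiss_mt {j : ℕ} (h : hasM A att c j) : isMiss A att c j (mtm A att c j) :=
  Nat.sInf_mem h

theorem mt_eq {j t : ℕ} (h : isMiss A att c j t) : mtm A att c j = t :=
  isMiss_unique (isMiss_mt ⟨t, h⟩) h

theorem exists_isMiss_of_lt_mc {j u : ℕ} (h : j < mc A att c u) : ∃ t < u, isMiss A att c j t := by
  induction u with
  | zero => rw [mc_zero] at h; omega
  | succ u ih =>
    rcases Nat.lt_or_ge j (mc A att c u) with h' | h'
    · obtain ⟨t, ht, hm⟩ := ih h'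
      exact ⟨t, by omega, hm⟩
    · rw [mc_succ] at h
      have ho : obs A att c u = false := by
        by_contra ho
        simp only [ho] at h
        split at h <;> simp_all <;> omega
      rw [ho] at h
      simp at h
      exact ⟨u, by omega, ho, by omega⟩

theorem mt_lt_of_lt {i j : ℕ} (hij : i < j) (h : hasM A att c j) :
    hasM A att c i ∧ mtm A att c i < mtm A att c j := by
  have h1 : mc A att c (mtm A att c j) = j := (isMiss_mt h).2
  obtain ⟨t, ht, hm⟩ := exists_isMiss_of_lt_mc (A := A) (att := att) (c := c)
    (u := mtm A att c j) (j := i) (by omega)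
  exact ⟨⟨t, hm⟩, by rw [mt_eq hm]; exact ht⟩

/-- start of segment `k` (just after miss `k-1`). -/
noncomputable def seg0 (A : ℕ) (att : List Bool → ℕ) (c : ℕ → ℕ) (k : ℕ) : ℕ :=
  if k = 0 then 0 else mtm A att c (k-1) + 1

theorem mc_seg0 {k : ℕ} (h : hasM A att c k) : mc A att c (seg0 A att c k) = k := by
  unfold seg0
  rcases Nat.eq_zero_or_pos k with h0 | h0
  · simp [h0, mc_zero]
  · rw [if_neg (by omega)]
    have hk1 : hasM A att c (k-1) := (mt_lt_of_lt (by omega) h).1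
    have h1 := isMiss_mt hk1
    rw [mc_succ, h1.1, h1.2]
    simp
    omega

theorem seg0_le_mt {k : ℕ} (h : hasM A att c k) : seg0 A att c k ≤ mtm A att c k := by
  unfold seg0
  rcases Nat.eq_zero_or_pos k with h0 | h0
  · simp [h0]
  · rw [if_neg (by omega)]
    have := (mt_lt_of_lt (show k - 1 < k by omega) h).2
    omega

theorem mc_between {k u : ℕ} (h : hasM A att c k) (h1 : seg0 A att c k ≤ u)
    (h2 : u ≤ mtm A att c k) : mc A att c u = k := by
  have ha := mc_mono (A := A) (att := att) (c := c) h1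
  have hb := mc_mono (A := A) (att := att) (c := c) h2
  rw [mc_seg0 h] at ha
  rw [(isMiss_mt h).2] at hb
  omega

theorem obs_true_between {k u : ℕ} (h : hasM A att c k) (h1 : seg0 A att c k ≤ u)
    (h2 : u < mtm A att c k) : obs A att c u = true := by
  by_contra ho
  simp only [Bool.not_eq_true] at ho
  have : isMiss A att c k u := ⟨ho, mc_between h h1 (by omega)⟩
  have := mt_eq this
  omega

/-- the blocks accessed at the first `k` misses. -/
noncomputable def missedBlocks (A : ℕ) (att : List Bool → ℕ) (c : ℕ → ℕ) (k : ℕ) : Finset ℕ :=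
  (Finset.range k).image (fun j => inp A att c (mtm A att c j))

/-- the window of the `k`-th miss: distinct non-previously-missed blocks accessed
in segment `k` (up to and including the `k`-th miss). -/
noncomputable def wnd (A : ℕ) (att : List Bool → ℕ) (c : ℕ → ℕ) (k : ℕ) : Finset ℕ :=
  (Finset.Icc (seg0 A att c k) (mtm A att c k)).image (inp A att c) \ missedBlocks A att c k

/-- the FIFO code of a state: number of fresh blocks in each miss window. -/
noncomputable def psi (A : ℕ) (att : List Bool → ℕ) (c : ℕ → ℕ) (k : ℕ) : ℕ :=
  @ite _ (hasM A att c k) (Classical.propDecidable _) (wnd A att c k).card 0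

theorem psi_pos {k : ℕ} (h : hasM A att c k) : psi A att c k = (wnd A att c k).card := by
  unfold psi; rw [if_pos h]

theorem psi_neg {k : ℕ} (h : ¬ hasM A att c k) : psi A att c k = 0 := by
  unfold psi; rw [if_neg h]

theorem mrun_ages_le (p : List (ℕ × Bool)) (h : ∀ b, c b ≤ A) :
    ∀ b, mrun (updFIFO A) p c b ≤ A := by
  induction p generalizing c with
  | nil => exact h
  | cons io p ih => exact ih (ages_le_updFIFO h)

theorem mrun_eq_aux (p : List (ℕ × Bool)) :
    ∀ (c c' : ℕ → ℕ) (j : ℕ),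
    Coherent (updFIFO A) (viewCache A) p c → Coherent (updFIFO A) (viewCache A) p c' →
    (∀ b, c b ≤ A) → (∀ b, c' b ≤ A) →
    (∀ b, c b < j → c b = c' b) → (∀ b, c' b < j → c b = c' b) →
    ∀ b, (mrun (updFIFO A) p c b < min (j + ((p.map Prod.snd).count false)) A ∨
          mrun (updFIFO A) p c' b < min (j + ((p.map Prod.snd).count false)) A) →
      mrun (updFIFO A) p c b = mrun (updFIFO A) p c' b := by
  induction p with
  | nil =>
    intro c c' j _ _ _ _ h5 h6 b hb
    simp only [mrun, List.map_nil, List.count_nil] at *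
    rcases hb with hb | hb
    · exact h5 b (by omega)
    · exact h6 b (by omega)
  | cons io p ih =>
    obtain ⟨i, o⟩ := io
    intro c c' j hco hco' h3 h4 h5 h6 b hb
    obtain ⟨hv, hcp⟩ := hco
    obtain ⟨hv', hcp'⟩ := hco'
    simp only [viewCache] at hv hv'
    have hmr : ∀ (x : ℕ → ℕ), mrun (updFIFO A) ((i,o) :: p) x = mrun (updFIFO A) p (updFIFO A i x) :=
      fun x => rfl
    simp only [hmr] at hb ⊢
    rcases o with _ | _
    · -- miss
      have hi : ¬ c i < A := by simpa using hv
      have hi' : ¬ c' i < A := by simpa using hv'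
      have hcnt : ((((i, false) :: p).map Prod.snd).count false) =
          ((p.map Prod.snd).count false) + 1 := by simp
      rw [hcnt] at hb
      have key : ∀ (x x' : ℕ → ℕ), (∀ b, x b ≤ A) → (∀ b, x' b ≤ A) → ¬ x i < A → ¬ x' i < A →
          (∀ b, x b < j → x b = x' b) → (∀ b, x' b < j → x b = x' b) →
          ∀ b, updFIFO A i x b < j + 1 → updFIFO A i x b = updFIFO A i x' b := by
        intro x x' hx hx' hxi hxi' hj1 hj2 b hbj
        rw [updFIFO_miss hxi] at hbj ⊢
        rw [updFIFO_miss hxi']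
        by_cases hbi : b = i
        · rw [if_pos hbi] at hbj ⊢; rw [if_pos hbi]
        · rw [if_neg hbi] at hbj ⊢; rw [if_neg hbi]
          rcases Nat.lt_or_ge (x b) A with hxb | hxb
          · rw [if_pos hxb] at hbj ⊢
            have hxeq : x b = x' b := hj1 b (by omega)
            rw [if_pos (by omega), hxeq]
          · rw [if_neg (by omega)] at hbj ⊢
            have hxA : x b = A := by have := hx b; omega
            have hx'A : x' b = A := by
              by_contra hne
              have hlt : x' b < A := by have := hx' b; omega
              have := hj2 b (by omega)
              omega
            rw [if_neg (by omega), hxA, hx'A]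
      apply ih (updFIFO A i c) (updFIFO A i c') (j+1) hcp hcp'
        (ages_le_updFIFO h3) (ages_le_updFIFO h4)
        (key c c' h3 h4 hi hi' h5 h6)
        (fun b hb' => (key c' c h4 h3 hi' hi (fun b hb'' => (h6 b hb'').symm)
          (fun b hb'' => (h5 b hb'').symm) b hb').symm)
      rw [show j + (((p.map Prod.snd).count false) + 1) =
        (j+1) + ((p.map Prod.snd).count false) from by omega] at hb
      exact hb
    · -- hit
      have hi : c i < A := by simpa using hv
      have hi' : c' i < A := by simpa using hv'
      have hcnt : ((((i, true) :: p).map Prod.snd).count false) =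
          ((p.map Prod.snd).count false) := by simp
      rw [hcnt] at hb
      rw [updFIFO_hit hi, updFIFO_hit hi'] at hb ⊢
      dsimp only at hcp hcp'
      rw [updFIFO_hit hi] at hcp
      rw [updFIFO_hit hi'] at hcp'
      exact ih c c' j hcp hcp' h3 h4 h5 h6 b hb

theorem mrun_eq_of_misses {p : List (ℕ × Bool)} (hc : ∀ b, c b ≤ A) (hc' : ∀ b, c' b ≤ A)
    (hco : Coherent (updFIFO A) (viewCache A) p c) (hco' : Coherent (updFIFO A) (viewCache A) p c')
    (hcnt : A ≤ (p.map Prod.snd).count false) :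
    mrun (updFIFO A) p c = mrun (updFIFO A) p c' := by
  funext b
  have hmin : min (0 + (p.map Prod.snd).count false) A = A := by omega
  rcases Nat.lt_or_ge (mrun (updFIFO A) p c b) A with h | h
  · exact mrun_eq_aux p c c' 0 hco hco' hc hc' (by omega) (by omega) b (Or.inl (by omega))
  · rcases Nat.lt_or_ge (mrun (updFIFO A) p c' b) A with h' | h'
    · exact mrun_eq_aux p c c' 0 hco hco' hc hc' (by omega) (by omega) b (Or.inr (by omega))
    · have h1 := mrun_ages_le (c := c) p hc b
      have h2 := mrun_ages_le (c := c') p hc' b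
      omega

theorem st_missed_zero {u : ℕ} (h : obs A att c u = false) : st A att c (u+1) (inp A att c u) = 0 := by
  rw [st_succ, updFIFO_miss (by have := obs_false_iff.mp h; omega), if_pos rfl]

theorem missed_still_cached {j k t : ℕ} (hj : hasM A att c j) (ht : mc A att c t = k)
    (hjk : j < k) (hkA : k ≤ A) (htt : mtm A att c j < t) :
    st A att c t (inp A att c (mtm A att c j)) < A := by
  set b := inp A att c (mtm A att c j)
  have h0 : st A att c (mtm A att c j + 1) b = 0 := st_missed_zero (isMiss_mt hj).1
  have h1 := st_le (A := A) (att := att) (c := c) (show mtm A att c j + 1 ≤ t by omega) b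
  have h2 : mc A att c (mtm A att c j + 1) = j + 1 := by
    rw [mc_succ, (isMiss_mt hj).1, (isMiss_mt hj).2]; simp
  rw [h0, h2, ht] at h1
  omega

theorem wnd_not_missedAt {k q : ℕ} (h : hasM A att c k) (hq : q ∈ wnd A att c k) :
    ¬ missedAt A att c q (mtm A att c k) := by
  rintro ⟨u, hu, ho, hi⟩
  have hmem := Finset.mem_sdiff.mp hq
  have hj : isMiss A att c (mc A att c u) u := ⟨ho, rfl⟩
  have hjk : mc A att c u ≤ k := by
    have := mc_mono (A := A) (att := att) (c := c) (show u ≤ mtm A att c k by omega)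
    rw [(isMiss_mt h).2] at this
    exact this
  rcases Nat.lt_or_ge (mc A att c u) k with hlt | hge
  · exact hmem.2 (Finset.mem_image.mpr ⟨mc A att c u, Finset.mem_range.mpr hlt, by rw [mt_eq hj, hi]⟩)
  · have : mc A att c u = k := by omega
    rw [this] at hj
    have := mt_eq hj
    omega

theorem wnd_cached {k q : ℕ} (h : hasM A att c k) (hq : q ∈ wnd A att c k)
    (hne : q ≠ inp A att c (mtm A att c k)) : st A att c (mtm A att c k) q < A := by
  have hmem := Finset.mem_sdiff.mp hq
  obtain ⟨u, hu, hqu⟩ := Finset.mem_image.mp hmem.1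
  rw [Finset.mem_Icc] at hu
  have hult : u < mtm A att c k := by
    rcases Nat.lt_or_ge u (mtm A att c k) with h' | h'
    · exact h'
    · exfalso; apply hne; rw [← hqu]; congr 1; omega
  have hcach : st A att c u (inp A att c u) < A :=
    obs_true_iff.mp (obs_true_between h hu.1 hult)
  have hconst : st A att c (mtm A att c k) = st A att c u :=
    st_const (by omega) (fun w hw hw' => obs_true_between h (by omega) hw')
  rw [hconst, hqu] at *
  rwa [hqu] at hcach

theorem capacity {k t : ℕ} (hc : CacheInv A c) (hmc : mc A att c t = k) (W : Finset ℕ)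
    (hW : ∀ q ∈ W, st A att c t q < A ∧ ¬ missedAt A att c q t) : W.card ≤ A - k := by
  have hinj : ∀ q ∈ W, ∀ q' ∈ W, st A att c t q = st A att c t q' → q = q' := by
    intro q hq q' hq' he
    exact (cacheInv_st hc t).2 q q' (hW q hq).1 he
  have hsub : ∀ q ∈ W, st A att c t q ∈ Finset.Ico k A := by
    intro q hq
    have h1 := (hW q hq).1
    have h2 := age_formula hc.1 (hW q hq).2
    rw [hmc] at h2
    rw [Finset.mem_Ico]
    omega
  calc W.card ≤ (Finset.Ico k A).card := Finset.card_le_card_of_injOn _ hsub hinj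
    _ = A - k := Nat.card_Ico k A

theorem self_mem_wnd {k : ℕ} (h : hasM A att c k) (hkA : k ≤ A) :
    inp A att c (mtm A att c k) ∈ wnd A att c k := by
  rw [wnd, Finset.mem_sdiff]
  constructor
  · exact Finset.mem_image.mpr ⟨mtm A att c k, Finset.mem_Icc.mpr ⟨seg0_le_mt h, le_refl _⟩, rfl⟩
  · intro hmem
    obtain ⟨j, hj, hje⟩ := Finset.mem_image.mp hmem
    rw [Finset.mem_range] at hj
    have hjM : hasM A att c j := (mt_lt_of_lt hj h).1
    have hcach : st A att c (mtm A att c k) (inp A att c (mtm A att c j)) < A :=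
      missed_still_cached hjM (isMiss_mt h).2 hj hkA (mt_lt_of_lt hj h).2
    rw [hje] at hcach
    have := obs_false_iff.mp (isMiss_mt h).1
    omega

theorem psi_ge_one {k : ℕ} (h : hasM A att c k) (hkA : k ≤ A) : 1 ≤ psi A att c k := by
  rw [psi_pos h]
  exact Finset.card_pos.mpr ⟨_, self_mem_wnd h hkA⟩

theorem psi_le {k : ℕ} (hc : CacheInv A c) (h : hasM A att c k) (hkA : k ≤ A) :
    psi A att c k ≤ A - k + 1 := by
  rw [psi_pos h]
  have hcap := capacity hc (isMiss_mt h).2 (wnd A att c k |>.erase (inp A att c (mtm A att c k)))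
    (fun q hq => by
      have hq' := Finset.mem_of_mem_erase hq
      exact ⟨wnd_cached h hq' (Finset.ne_of_mem_erase hq), wnd_not_missedAt h hq'⟩)
  have hcard := Finset.card_erase_of_mem (self_mem_wnd h hkA)
  omega

theorem prb_eq_mono {T u : ℕ} (h : prb A att c T = prb A att c' T) (hu : u ≤ T) :
    prb A att c u = prb A att c' u := by
  rw [prb_take hu, prb_take (c := c') hu, h]

theorem inp_eq_of_prb {T u : ℕ} (h : prb A att c T = prb A att c' T) (hu : u ≤ T) :
    inp A att c u = inp A att c' u := by
  unfold inp
  rw [prb_eq_mono h hu]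

theorem mc_eq_of_prb {T u : ℕ} (h : prb A att c T = prb A att c' T) (hu : u ≤ T) :
    mc A att c u = mc A att c' u := by
  unfold mc
  rw [prb_eq_mono h hu]

theorem obs_eq_of_prb {T u : ℕ} (h : prb A att c T = prb A att c' T) (hu : u < T) :
    obs A att c u = obs A att c' u := by
  have h1 : prb A att c (u+1) = prb A att c' (u+1) := prb_eq_mono h (by omega)
  rw [prb_succ, prb_succ] at h1
  have h2 := prb_eq_mono h (show u ≤ T by omega)
  rw [h2] at h1
  have := List.append_inj_right h1 rfl
  simpa using congrArg (fun l => (l.headI : ℕ × Bool).2) this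

theorem isMiss_eq_of_prb {T u j : ℕ} (h : prb A att c T = prb A att c' T) (hu : u < T)
    (hm : isMiss A att c j u) : isMiss A att c' j u :=
  ⟨by rw [← obs_eq_of_prb h hu]; exact hm.1, by rw [← mc_eq_of_prb h (by omega : u ≤ T)]; exact hm.2⟩

theorem mtm_eq_of_prb {T j : ℕ} (h : prb A att c T = prb A att c' T) (hj : hasM A att c j)
    (hlt : mtm A att c j < T) : hasM A att c' j ∧ mtm A att c' j = mtm A att c j := by
  have := isMiss_eq_of_prb h hlt (isMiss_mt hj)
  exact ⟨⟨_, this⟩, mt_eq this⟩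

theorem eq_step_false {j t : ℕ} (hjA : j < A)
    (hpsi : psi A att c j = psi A att c' j)
    (hpr : prb A att c t = prb A att c' t)
    (hmc : mc A att c t = j)
    (ho : obs A att c t = false) : obs A att c' t = false := by
  have hmj : isMiss A att c j t := ⟨ho, hmc⟩
  have hM : hasM A att c j := ⟨t, hmj⟩
  have htm : mtm A att c j = t := mt_eq hmj
  by_contra hcon
  have ho' : obs A att c' t = true := by simpa using hcon
  have hone := psi_ge_one hM (le_of_lt hjA)
  have hM' : hasM A att c' j := by
    by_contra hno
    rw [psi_neg hno] at hpsi
    omega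
  set t' := mtm A att c' j with ht'
  have hmc'j : mc A att c' t = j := by rw [← mc_eq_of_prb hpr (le_refl t)]; exact hmc
  have hlt : t < t' := by
    rcases Nat.lt_trichotomy t t' with h' | h' | h'
    · exact h'
    · exfalso
      have := (isMiss_mt hM').1
      rw [← ht', ← h'] at this
      rw [this] at ho'
      simp at ho'
    · exfalso
      have := isMiss_eq_of_prb hpr.symm h' (isMiss_mt hM')
      have := isMiss_unique this hmj
      omega
  have hseg : seg0 A att c' j = seg0 A att c j := by
    unfold seg0
    rcases Nat.eq_zero_or_pos j with h0 | h0
    · simp [h0]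
    · rw [if_neg (by omega), if_neg (by omega)]
      have hj1 := mt_lt_of_lt (show j - 1 < j by omega) hM
      have : mtm A att c (j-1) < t := by rw [← htm]; exact hj1.2
      rw [(mtm_eq_of_prb hpr hj1.1 this).2]
  have hmb : missedBlocks A att c' j = missedBlocks A att c j := by
    unfold missedBlocks
    apply Finset.image_congr
    intro j' hj'
    rw [Finset.coe_range, Set.mem_Iio] at hj'
    show inp A att c' (mtm A att c' j') = inp A att c (mtm A att c j')
    have hj1 := mt_lt_of_lt hj' hM
    have hlt' : mtm A att c j' < t := by rw [← htm]; exact hj1.2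
    have := mtm_eq_of_prb hpr hj1.1 hlt'
    rw [this.2]
    exact (inp_eq_of_prb hpr (by omega)).symm
  have hsub : wnd A att c j ⊆ wnd A att c' j := by
    intro q hq
    rw [wnd, Finset.mem_sdiff] at hq ⊢
    obtain ⟨u, hu, hqu⟩ := Finset.mem_image.mp hq.1
    rw [Finset.mem_Icc, htm] at hu
    constructor
    · apply Finset.mem_image.mpr ⟨u, ?_, ?_⟩
      · rw [Finset.mem_Icc, hseg]
        exact ⟨hu.1, by omega⟩
      · rw [← inp_eq_of_prb hpr (by omega)]
        exact hqu
    · rw [hmb]; exact hq.2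
  have hxmem : inp A att c' t' ∈ wnd A att c' j := self_mem_wnd hM' (by omega)
  have hxnot : inp A att c' t' ∉ wnd A att c j := by
    intro hmem
    rw [wnd, Finset.mem_sdiff] at hmem
    obtain ⟨u, hu, hqu⟩ := Finset.mem_image.mp hmem.1
    rw [Finset.mem_Icc, htm] at hu
    have hobs : obs A att c' u = true := by
      rcases Nat.lt_or_ge u t with h' | h'
      · rw [← obs_eq_of_prb hpr h']
        exact obs_true_between hM hu.1 (by omega)
      · have : u = t := by omega
        rw [this]; exact ho'
    have hinpu : inp A att c' u = inp A att c' t' := by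
      rw [← inp_eq_of_prb hpr (by omega)]
      exact hqu
    have hcach : st A att c' u (inp A att c' t') < A := by
      rw [← hinpu]
      exact obs_true_iff.mp hobs
    have hconst : st A att c' t' = st A att c' u := by
      apply st_const (by omega)
      intro w hw hw'
      apply obs_true_between hM' _ hw'
      rw [hseg]
      omega
    have huncach := obs_false_iff.mp (isMiss_mt hM').1
    rw [← ht'] at huncach
    rw [hconst] at huncach
    omega
  have hss : wnd A att c j ⊂ wnd A att c' j := ⟨hsub, fun hss => hxnot (hss hxmem)⟩
  have := Finset.card_lt_card hss
  rw [psi_pos hM, psi_pos hM'] at hpsi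
  omega

theorem eq_step {j t : ℕ} (hjA : j < A)
    (hpsi : psi A att c j = psi A att c' j)
    (hpr : prb A att c t = prb A att c' t)
    (hmc : mc A att c t = j) : obs A att c t = obs A att c' t := by
  have hmc' : mc A att c' t = j := by rw [← mc_eq_of_prb hpr (le_refl t)]; exact hmc
  rcases hoc : obs A att c t with _ | _ <;> rcases hoc' : obs A att c' t with _ | _
  · rfl
  · exfalso
    have := eq_step_false hjA hpsi hpr hmc hoc
    rw [this] at hoc'
    exact Bool.noConfusion hoc'
  · exfalso
    have := eq_step_false hjA hpsi.symm hpr.symm hmc' hoc'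
    rw [this] at hoc
    exact Bool.noConfusion hoc
  · rfl

theorem prb_eq_upto {k : ℕ} (hkA : k ≤ A) (hpsi : ∀ j < k, psi A att c j = psi A att c' j) :
    ∀ t, mc A att c t ≤ k → mc A att c' t ≤ k → prb A att c t = prb A att c' t := by
  intro t
  induction t with
  | zero => intro _ _; rfl
  | succ t ih =>
    intro h1 h2
    have h1t : mc A att c t ≤ k := le_trans (mc_mono (by omega)) h1
    have h2t : mc A att c' t ≤ k := le_trans (mc_mono (by omega)) h2
    have hpr := ih h1t h2t
    have hinp : inp A att c t = inp A att c' t := inp_eq_of_prb hpr (le_refl t)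
    have hmc' : mc A att c' t = mc A att c t := (mc_eq_of_prb hpr (le_refl t)).symm
    have hobs : obs A att c t = obs A att c' t := by
      rcases Nat.lt_or_ge (mc A att c t) k with hlt | hge
      · exact eq_step (by omega) (hpsi _ hlt) hpr rfl
      · have hk : mc A att c t = k := by omega
        have ho1 : obs A att c t = true := by
          by_contra ho
          simp only [Bool.not_eq_true] at ho
          rw [mc_succ, ho] at h1
          simp at h1
          omega
        have ho2 : obs A att c' t = true := by
          by_contra ho
          simp only [Bool.not_eq_true] at ho
          rw [mc_succ, ho] at h2
          simp at h2
          omega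
        rw [ho1, ho2]
    rw [prb_succ, prb_succ, hpr, hinp, hobs]

theorem prb_eq_all (hc : CacheInv A c) (hc' : CacheInv A c')
    (hpsi : ∀ j < A, psi A att c j = psi A att c' j) : ∀ t, prb A att c t = prb A att c' t := by
  intro t
  induction t with
  | zero => rfl
  | succ t ih =>
    have hinp : inp A att c t = inp A att c' t := inp_eq_of_prb ih (le_refl t)
    have hobs : obs A att c t = obs A att c' t := by
      rcases Nat.lt_or_ge (mc A att c t) A with hlt | hge
      · exact eq_step hlt (hpsi _ hlt) ih rfl
      · have hco : Coherent (updFIFO A) (viewCache A) (prb A att c' t) c := by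
          rw [← ih]
          exact coherent_probeN _ _ _ _ _
        have hco' : Coherent (updFIFO A) (viewCache A) (prb A att c' t) c' :=
          coherent_probeN _ _ _ _ _
        have hst : st A att c t = st A att c' t := by
          unfold st
          rw [ih]
          exact mrun_eq_of_misses hc.1 hc'.1 hco hco' (by
            have hh : ((prb A att c' t).map Prod.snd).count false = mc A att c' t := rfl
            rw [hh, ← mc_eq_of_prb ih (le_refl t)]
            omega)
        unfold obs
        rw [hinp, hst]
    rw [prb_succ, prb_succ, ih, hinp, hobs]

theorem branch_card : ∀ (L : ℕ) (n : ℕ → ℕ) (S : Finset (List ℕ)),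
    (∀ l ∈ S, l.length = L) →
    (∀ p : List ℕ, p.length < L →
      ∃ V : Finset ℕ, V.card ≤ n p.length ∧ ∀ x, (∃ l ∈ S, p ++ [x] <+: l) → x ∈ V) →
    S.card ≤ ∏ k ∈ Finset.range L, n k := by
  intro L
  induction L with
  | zero =>
    intro n S hlen _
    simp only [Finset.range_zero, Finset.prod_empty]
    have : S ⊆ {[]} := by
      intro l hl
      rw [Finset.mem_singleton]
      exact List.length_eq_zero_iff.mp (hlen l hl)
    exact le_trans (Finset.card_le_card this) (by simp)
  | succ L ih =>
    intro n S hlen hbr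
    obtain ⟨V0, hV0card, hV0⟩ := hbr [] (by simp)
    have hsub : S ⊆ V0.biUnion (fun x => S.filter (fun l => l.headI = x)) := by
      intro l hl
      rw [Finset.mem_biUnion]
      refine ⟨l.headI, hV0 l.headI ⟨l, hl, ?_⟩, Finset.mem_filter.mpr ⟨hl, rfl⟩⟩
      rcases l with _ | ⟨a, l'⟩
      · exact absurd (hlen _ hl) (by simp)
      · simp [List.headI]
    have hfil : ∀ x, (S.filter (fun l => l.headI = x)).card ≤ ∏ k ∈ Finset.range L, n (k+1) := by
      intro x
      set T : Finset (List ℕ) := (S.filter (fun l => l.headI = x)).image List.tail with hT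
      have hcardeq : (S.filter (fun l => l.headI = x)).card = T.card := by
        rw [hT]
        rw [Finset.card_image_of_injOn]
        intro l hl l2 hl2 he
        rw [Finset.mem_coe, Finset.mem_filter] at hl hl2
        rcases l with _ | ⟨a, l'⟩
        · exact absurd (hlen _ hl.1) (by simp)
        · rcases l2 with _ | ⟨a2, l2'⟩
          · exact absurd (hlen _ hl2.1) (by simp)
          · simp only [List.headI] at hl hl2
            simp only [List.tail] at he
            rw [hl.2, hl2.2] at *
            rw [he]
      rw [hcardeq]
      apply ih (fun k => n (k+1)) T
      · intro l' hl'
        obtain ⟨l, hl, rfl⟩ := Finset.mem_image.mp hl'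
        have := hlen l (Finset.mem_filter.mp hl).1
        rcases l with _ | ⟨a, l'⟩
        · simp at this
        · simp at this ⊢
          omega
      · intro p hp
        obtain ⟨V, hVcard, hV⟩ := hbr (x :: p) (by simp; omega)
        refine ⟨V, by simpa using hVcard, ?_⟩
        intro y ⟨l', hl', hpre⟩
        obtain ⟨l, hl, rfl⟩ := Finset.mem_image.mp hl'
        have hlS := (Finset.mem_filter.mp hl).1
        have hhead := (Finset.mem_filter.mp hl).2
        apply hV y
        refine ⟨l, hlS, ?_⟩
        rcases l with _ | ⟨a, lt⟩
        · exact absurd (hlen _ hlS) (by simp)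
        · simp only [List.headI] at hhead
          simp only [List.tail] at hpre
          rw [show ((x :: p) ++ [y]) = x :: (p ++ [y]) from rfl, ← hhead]
          exact List.cons_prefix_cons.mpr ⟨rfl, hpre⟩
    calc S.card ≤ (V0.biUnion (fun x => S.filter (fun l => l.headI = x))).card :=
          Finset.card_le_card hsub
      _ ≤ ∑ x ∈ V0, (S.filter (fun l => l.headI = x)).card := Finset.card_biUnion_le
      _ ≤ ∑ _x ∈ V0, ∏ k ∈ Finset.range L, n (k+1) := Finset.sum_le_sum (fun x _ => hfil x)
      _ = V0.card * ∏ k ∈ Finset.range L, n (k+1) := by rw [Finset.sum_const, smul_eq_mul]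
      _ ≤ n 0 * ∏ k ∈ Finset.range L, n (k+1) := Nat.mul_le_mul_right _ hV0card
      _ = ∏ k ∈ Finset.range (L+1), n k := by rw [Finset.prod_range_succ', Nat.mul_comm]

/-- the code of a state: fresh-block counts of the first `A` miss windows. -/
noncomputable def code (A : ℕ) (att : List Bool → ℕ) (c : ℕ → ℕ) : List ℕ :=
  (List.range A).map (psi A att c)

@[simp] theorem code_length : (code A att c).length = A := by simp [code]

theorem code_getElem {j : ℕ} (hj : j < A) : (code A att c)[j]'(by simpa using hj) = psi A att c j := by
  simp [code]

theorem psi_eq_zero_iff {k : ℕ} (hk : k ≤ A) : psi A att c k = 0 ↔ ¬ hasM A att c k := by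
  constructor
  · intro h hM
    have := psi_ge_one hM hk
    omega
  · exact psi_neg

theorem not_hasM_mc_le {k : ℕ} (h : ¬ hasM A att c k) (u : ℕ) : mc A att c u ≤ k := by
  by_contra hcon
  obtain ⟨t, _, hm⟩ := exists_isMiss_of_lt_mc (A := A) (att := att) (c := c)
    (j := k) (u := u) (by omega)
  exact h ⟨t, hm⟩

theorem missedAt_transfer {T q : ℕ} (h : prb A att c T = prb A att c' T)
    (hm : missedAt A att c' q T) : missedAt A att c q T := by
  obtain ⟨u', hu', ho', hi'⟩ := hm
  exact ⟨u', hu', by rw [obs_eq_of_prb h hu']; exact ho', by rw [inp_eq_of_prb h (by omega)]; exact hi'⟩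

/-- Exclusivity: if some state in the same class has no `k`-th miss, the window
of a state that does miss is small. -/
theorem psi_le_of_nomiss {k : ℕ} (hk : k < A) (hc : CacheInv A c) (hc' : CacheInv A c')
    (hpsi : ∀ j < k, psi A att c j = psi A att c' j) (hM : hasM A att c k)
    (hM' : ¬ hasM A att c' k) : psi A att c k ≤ A - k := by
  set t := mtm A att c k with htdef
  have hmiss := isMiss_mt hM
  have hpr : prb A att c t = prb A att c' t :=
    prb_eq_upto (by omega) hpsi t (by rw [hmiss.2]) (not_hasM_mc_le hM' t)
  have hmc' : mc A att c' t = k := by rw [← mc_eq_of_prb hpr (le_refl t)]; exact hmiss.2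
  have ho' : obs A att c' t = true := by
    by_contra ho
    simp only [Bool.not_eq_true] at ho
    exact hM' ⟨t, ho, hmc'⟩
  have hWmem : ∀ q ∈ wnd A att c k, st A att c' t q < A ∧ ¬ missedAt A att c' q t := by
    intro q hq
    have hqs := Finset.mem_sdiff.mp hq
    obtain ⟨u, hu, hqu⟩ := Finset.mem_image.mp hqs.1
    rw [Finset.mem_Icc, ← htdef] at hu
    have hobs' : obs A att c' u = true := by
      rcases Nat.lt_or_ge u t with h' | h'
      · rw [← obs_eq_of_prb hpr h']
        exact obs_true_between hM hu.1 (by omega)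
      · have : u = t := by omega
        rw [this]; exact ho'
    have hinpu : inp A att c' u = q := by rw [← inp_eq_of_prb hpr (by omega)]; exact hqu
    have hcach : st A att c' u q < A := by rw [← hinpu]; exact obs_true_iff.mp hobs'
    have hconst : st A att c' t = st A att c' u := by
      apply st_const (by omega)
      intro w hw hw'
      rcases Nat.lt_or_ge w t with h' | h'
      · rw [← obs_eq_of_prb hpr h']
        exact obs_true_between hM (by omega) (by omega)
      · omega
    refine ⟨by rw [hconst]; exact hcach, fun hmat => ?_⟩
    exact wnd_not_missedAt hM hq (missedAt_transfer hpr hmat)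
  have hcap := capacity hc' hmc' (wnd A att c k) hWmem
  rw [psi_pos hM]
  exact hcap

theorem code_branch (Sv : Set (ℕ → ℕ)) (hinv : ∀ c ∈ Sv, CacheInv A c)
    (p : List ℕ) (hp : p.length < A) :
    ∃ V : Finset ℕ, V.card ≤ A + 1 - p.length ∧
      ∀ x, (∃ c ∈ Sv, p ++ [x] <+: code A att c) → x ∈ V := by
  have hpsi_of_pre : ∀ {c : ℕ → ℕ} {x : ℕ}, (p ++ [x] <+: code A att c) →
      psi A att c p.length = x ∧ ∀ j (hj : j < p.length), psi A att c j = p[j]'hj := by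
    intro c x hpre
    have hlen : (p ++ [x]).length ≤ A := by
      have := hpre.length_le
      simpa using this
    constructor
    · have h1 := hpre.getElem (i := p.length) (by simp)
      rw [List.getElem_append_right (by omega)] at h1
      rw [code_getElem (by omega)] at h1
      simp at h1
      omega
    · intro j hj
      have h1 := hpre.getElem (i := j) (by simp; omega)
      rw [List.getElem_append_left (by omega)] at h1
      rw [code_getElem (by omega)] at h1
      exact h1.symm ▸ rfl
  by_cases h0 : ∃ c0 ∈ Sv, p ++ [0] <+: code A att c0
  · obtain ⟨c0, hc0S, hpre0⟩ := h0
    obtain ⟨hx0, hpre0j⟩ := hpsi_of_pre hpre0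
    have hM0 : ¬ hasM A att c0 p.length := (psi_eq_zero_iff (by omega)).mp hx0
    refine ⟨Finset.range (A - p.length + 1), by rw [Finset.card_range]; omega, ?_⟩
    rintro x ⟨c, hcS, hpre⟩
    obtain ⟨hx, hprej⟩ := hpsi_of_pre hpre
    rw [Finset.mem_range]
    rcases Nat.eq_zero_or_pos x with hx0' | hx0'
    · omega
    · have hM : hasM A att c p.length := by
        by_contra hM
        rw [psi_neg hM] at hx
        omega
      have := psi_le_of_nomiss hp (hinv c hcS) (hinv c0 hc0S)
        (fun j hj => by rw [hprej j hj, hpre0j j hj]) hM hM0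
      omega
  · refine ⟨Finset.Icc 1 (A - p.length + 1), by rw [Nat.card_Icc]; omega, ?_⟩
    rintro x ⟨c, hcS, hpre⟩
    obtain ⟨hx, hprej⟩ := hpsi_of_pre hpre
    have hxne : x ≠ 0 := by
      rintro rfl
      exact h0 ⟨c, hcS, hpre⟩
    have hM : hasM A att c p.length := by
      by_contra hM
      rw [psi_neg hM] at hx
      omega
    rw [Finset.mem_Icc]
    have h1 := psi_le (hinv c hcS) hM (by omega)
    omega

theorem prod_add_two (A : ℕ) : ∏ k ∈ Finset.range A, (k + 2) = Nat.factorial (A + 1) := by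
  induction A with
  | zero => rfl
  | succ A ih =>
    rw [Finset.prod_range_succ, ih, Nat.factorial_succ (A+1)]
    ring

theorem prod_desc (A : ℕ) : ∏ k ∈ Finset.range A, (A + 1 - k) = Nat.factorial (A + 1) := by
  rw [← prod_add_two A, ← Finset.prod_range_reflect (fun k => k + 2) A]
  apply Finset.prod_congr rfl
  intro j hj
  rw [Finset.mem_range] at hj
  omega

theorem code_image_card (Sv : Set (ℕ → ℕ)) (hfin : Sv.Finite) (hinv : ∀ c ∈ Sv, CacheInv A c) :
    ((code A att) '' Sv).ncard ≤ Nat.factorial (A + 1) := by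
  have hfc : ((code A att) '' Sv).Finite := hfin.image _
  rw [Set.ncard_eq_toFinset_card _ hfc]
  refine le_trans (branch_card A (fun k => A + 1 - k) hfc.toFinset ?_ ?_) (le_of_eq (prod_desc A))
  · intro l hl
    rw [Set.Finite.mem_toFinset] at hl
    obtain ⟨c, _, rfl⟩ := hl
    exact code_length
  · intro p hp
    obtain ⟨V, hV1, hV2⟩ := code_branch Sv hinv p hp
    refine ⟨V, hV1, ?_⟩
    rintro x ⟨l, hl, hpre⟩
    rw [Set.Finite.mem_toFinset] at hl
    obtain ⟨c, hc, rfl⟩ := hl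
    exact hV2 x ⟨c, hc, hpre⟩

theorem ncard_image_le_of_determines {α β γ : Type*} {S : Set α} (hfin : S.Finite)
    (f : α → β) (g : α → γ) (h : ∀ a ∈ S, ∀ b ∈ S, g a = g b → f a = f b) :
    (f '' S).ncard ≤ (g '' S).ncard := by
  classical
  rcases S.eq_empty_or_nonempty with rfl | ⟨a0, ha0⟩
  · simp
  set h' : γ → β := fun y => if hy : ∃ a ∈ S, g a = y then f hy.choose else f a0 with hh
  have hsub : f '' S ⊆ h' '' (g '' S) := by
    rintro x ⟨a, ha, rfl⟩
    refine ⟨g a, ⟨a, ha, rfl⟩, ?_⟩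
    have hy : ∃ b ∈ S, g b = g a := ⟨a, ha, rfl⟩
    rw [hh]
    dsimp only
    rw [dif_pos hy]
    exact h _ hy.choose_spec.1 a ha hy.choose_spec.2
  calc (f '' S).ncard ≤ (h' '' (g '' S)).ncard :=
        Set.ncard_le_ncard hsub ((hfin.image g).image h')
    _ ≤ (g '' S).ncard := Set.ncard_image_le (hfin.image g)

theorem code_getD {j : ℕ} (hj : j < A) : (code A att c).getD j 0 = psi A att c j := by
  rw [List.getD_eq_getElem (hn := by simpa using hj)]
  exact code_getElem hj

end FIFO
/-- For a FIFO cache of associativity `A` and a shared-memory attacker (who may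
input any block), any probing strategy partitions any finite set of possible
initial cache states into at most `(A+1)!` knowledge sets. -/
theorem fifo_extraction_le (A : ℕ) (Sv : Set (ℕ → ℕ)) (hfin : Sv.Finite)
    (hinv : ∀ c ∈ Sv, CacheInv A c) (att : List Bool → ℕ) :
    (KnowledgeSets (updFIFO A) (viewCache A) Sv att).ncard ≤ Nat.factorial (A + 1) := by
  classical
  have h1 := knowledgeSets_ncard_le (updFIFO A) (viewCache A) att Sv hfin
  have h2 : ((fun c => (fun n => probeN (updFIFO A) (viewCache A) att c n)) '' Sv).ncard ≤
      ((code A att) '' Sv).ncard := by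
    apply ncard_image_le_of_determines hfin _ (code A att)
    intro a ha b hb hg
    have hpsi : ∀ j < A, psi A att a j = psi A att b j := by
      intro j hj
      have hj2 := congrArg (fun l => l.getD j 0) hg
      rwa [code_getD hj, code_getD hj] at hj2
    funext n
    exact prb_eq_all (hinv a ha) (hinv b hb) hpsi n
  have h3 := code_image_card (att := att) Sv hfin hinv
  omega
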